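/- Let n ≥ 3 and let w_0, w_1, …, w_l be a symmetric decreasing filter of length l (0 < l ≤ ⌊(n−1)/2⌋), i.e. additionally w_0 ≥ w_1 ≥ … ≥ w_l, with w_k = 0 for k > l. Let W^AR ∈ ℝ^{n×n} be the Anti-Reflective matrix built from it. Then all entries of W^AR are nonnegative, every row of W^AR sums to 1 (so its ∞-operator norm equals 1), and every eigenvalue of W^AR lies in the closed complex unit disc; in particular every real eigenvalue of W^AR lies in [−1, 1]. -/

import Mathlib

open Finset

section AuxAR
variable {l : ℕ} {w : ℕ → ℝ}

private lemma arTrunc (hzero : ∀ k, l < k → w k = 0) {a b : ℕ} (hlb : l ≤ b) :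
    ∑ k ∈ Icc a b, w k = ∑ k ∈ Icc a l, w k := by
  refine (Finset.sum_subset (fun x hx => ?_) (fun x hx hxn => ?_)).symm
  · simp only [mem_Icc] at *; omega
  · simp only [mem_Icc] at *; exact hzero x (by omega)

private lemma arKey (hzero : ∀ k, l < k → w k = 0) {m : ℕ} (hm : 1 ≤ m) :
    ∑ k ∈ Icc 1 (m-1), w k + (w m + ∑ k ∈ Icc (m+1) l, w k) = ∑ k ∈ Icc 1 l, w k := by
  have e1 : Icc 1 (m-1) = Ico 1 m := by rw [← Finset.Ico_add_one_right_eq_Icc]; congr 1; omega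
  rcases le_or_gt m l with h | h
  · rw [e1, show Icc 1 l = Ico 1 (l+1) by rw [Finset.Ico_add_one_right_eq_Icc],
      ← Finset.sum_Ico_consecutive _ hm (by omega : m ≤ l + 1),
      Finset.sum_eq_sum_Ico_succ_bot (by omega : m < l + 1), Finset.Ico_add_one_right_eq_Icc]
  · have h2 : ∑ k ∈ Ico (l+1) m, w k = 0 :=
      Finset.sum_eq_zero (fun k hk => hzero k (by simp only [mem_Ico] at hk; omega))
    rw [Icc_eq_empty (by omega : ¬ m + 1 ≤ l), sum_empty, hzero m h, add_zero, add_zero, e1,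
      show Ico 1 m = Ico 1 (l+1) ∪ Ico (l+1) m by
        rw [Finset.Ico_union_Ico_eq_Ico (by omega) (by omega)],
      Finset.sum_union (Finset.Ico_disjoint_Ico_consecutive _ _ _), h2, add_zero,
      Finset.Ico_add_one_right_eq_Icc]

private lemma arInteriorRow {n a : ℕ} (hzero : ∀ k, l < k → w k = 0)
    (hn : 3 ≤ n) (hln : l ≤ (n-1)/2) (ha1 : 1 ≤ a) (ha2 : a ≤ n - 2) :
    (2 * ∑ k ∈ Icc (a+1) l, w k + w a)
      + (∑ j ∈ Ico 1 (n-1), (w ((a:ℤ) - (j:ℤ)).natAbs - (w (a+j) + w (2*n-2-a-j))))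
      + (2 * ∑ k ∈ Icc (n-a) l, w k + w (n-1-a))
    = w 0 + 2 * ∑ k ∈ Icc 1 l, w k := by
  have hl2 : l ≤ n - 2 := by omega
  have hA : ∑ j ∈ Ico 1 (n-1), w ((a:ℤ) - (j:ℤ)).natAbs
      = (∑ k ∈ Icc 1 (a-1), w k) + (w 0 + ∑ k ∈ Icc 1 (n-2-a), w k) := by
    rw [← Finset.sum_Ico_consecutive _ (ha1 : 1 ≤ a) (by omega : a ≤ n-1)]
    congr 1
    · rw [Finset.sum_Ico_eq_sum_range]
      have : ∀ j ∈ range (a-1), w ((a:ℤ) - ((1+j:ℕ):ℤ)).natAbs = (fun t => w (t+1)) (a-1-1-j) := by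
        intro j hj; simp only [mem_range] at hj; congr 1; omega
      rw [Finset.sum_congr rfl this, Finset.sum_range_reflect (fun t => w (t+1)) (a-1)]
      rw [show Icc 1 (a-1) = Ico 1 a from by rw [← Finset.Ico_add_one_right_eq_Icc]; congr 1; omega,
        Finset.sum_Ico_eq_sum_range]
      apply Finset.sum_congr rfl; intro j hj; congr 1; omega
    · rw [Finset.sum_Ico_eq_sum_range]
      have : ∀ j ∈ range (n-1-a), w ((a:ℤ) - ((a+j:ℕ):ℤ)).natAbs = w j := by
        intro j hj; congr 1; omega
      rw [Finset.sum_congr rfl this, Finset.range_eq_Ico,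
        Finset.sum_eq_sum_Ico_succ_bot (by omega : 0 < n-1-a),
        show Ico (0+1) (n-1-a) = Icc 1 (n-2-a) from by rw [← Finset.Ico_add_one_right_eq_Icc]; congr 1; omega]
  have hB : ∑ j ∈ Ico 1 (n-1), w (a+j) = ∑ k ∈ Icc (a+1) l, w k := by
    rw [Finset.sum_Ico_eq_sum_range, ← arTrunc hzero (by omega : l ≤ a + (n-2)),
      show Icc (a+1) (a+(n-2)) = Ico (a+1) (a+1+(n-2)) from by
        rw [← Finset.Ico_add_one_right_eq_Icc]; congr 1; omega,
      Finset.sum_Ico_eq_sum_range]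
    apply Finset.sum_congr (by congr 1; omega); intro j hj; congr 1; omega
  have hC : ∑ j ∈ Ico 1 (n-1), w (2*n-2-a-j) = ∑ k ∈ Icc (n-a) l, w k := by
    rw [Finset.sum_Ico_eq_sum_range]
    have : ∀ j ∈ range (n-1-1), w (2*n-2-a-(1+j)) = (fun t => w (n-a+t)) (n-1-1-1-j) := by
      intro j hj; simp only [mem_range] at hj; congr 1; omega
    rw [Finset.sum_congr rfl this, Finset.sum_range_reflect (fun t => w (n-a+t)) (n-1-1),
      ← arTrunc hzero (by omega : l ≤ (n-a) + (n-3)),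
      show Icc (n-a) (n-a+(n-3)) = Ico (n-a) (n-a+(n-2)) from by
        rw [← Finset.Ico_add_one_right_eq_Icc]; congr 1; omega,
      Finset.sum_Ico_eq_sum_range]
    apply Finset.sum_congr (by congr 1; omega); intro j hj; rfl
  have hsplit : ∑ j ∈ Ico 1 (n-1), (w ((a:ℤ) - (j:ℤ)).natAbs - (w (a+j) + w (2*n-2-a-j)))
      = (∑ j ∈ Ico 1 (n-1), w ((a:ℤ) - (j:ℤ)).natAbs)
        - ((∑ j ∈ Ico 1 (n-1), w (a+j)) + (∑ j ∈ Ico 1 (n-1), w (2*n-2-a-j))) := by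
    rw [Finset.sum_sub_distrib, Finset.sum_add_distrib]
  have k1 := arKey hzero (ha1 : 1 ≤ a)
  have k2 := arKey hzero (by omega : 1 ≤ n - 1 - a)
  rw [show n-1-a-1 = n-2-a from by omega, show n-1-a+1 = n-a from by omega] at k2
  rw [hsplit, hA, hB, hC]
  linarith [k1, k2]

private lemma arWnonneg (hpos : ∀ j, j ≤ l → 0 < w j) (hzero : ∀ k, l < k → w k = 0) (k : ℕ) :
    0 ≤ w k := by
  rcases le_or_gt k l with h | h
  · exact (hpos k h).le
  · exact (hzero k h).ge

private lemma arInteriorNonneg {n a b : ℕ} (hpos : ∀ j, j ≤ l → 0 < w j)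
    (hdec : ∀ i j, i ≤ j → j ≤ l → w j ≤ w i) (hzero : ∀ k, l < k → w k = 0)
    (hn : 3 ≤ n) (hln : l ≤ (n-1)/2)
    (ha1 : 1 ≤ a) (ha2 : a ≤ n - 2) (hb1 : 1 ≤ b) (hb2 : b ≤ n - 2) :
    0 ≤ w ((a:ℤ) - (b:ℤ)).natAbs - (w (a+b) + w (2*n-2-a-b)) := by
  set d := ((a:ℤ) - (b:ℤ)).natAbs with hd
  have hdp : d ≤ a + b := by omega
  have hdq : d ≤ 2*n-2-a-b := by omega
  rcases le_or_gt (a+b) l with h1 | h1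
  · have h2 : w (2*n-2-a-b) = 0 := hzero _ (by omega)
    have := hdec d (a+b) hdp h1
    linarith
  · have h2 : w (a+b) = 0 := hzero _ h1
    rcases le_or_gt (2*n-2-a-b) l with h3 | h3
    · have := hdec d _ hdq h3
      linarith
    · have h4 : w (2*n-2-a-b) = 0 := hzero _ h3
      have := arWnonneg hpos hzero d
      linarith

private lemma arSpecNormLe {n : ℕ} {K : Type*} [NormedField K] (M : Matrix (Fin n) (Fin n) K)
    {μ : K} (hμ : μ ∈ spectrum K M) : ∃ k, ‖μ‖ ≤ ∑ j, ‖M k j‖ := by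
  have h1 : μ ∈ spectrum K (Matrix.toLin' M) := by
    rwa [show Matrix.toLin' M = Matrix.toLinAlgEquiv' M from rfl,
      AlgEquiv.spectrum_eq Matrix.toLinAlgEquiv' M]
  have h2 : Module.End.HasEigenvalue (Matrix.toLin' M) μ :=
    Module.End.hasEigenvalue_iff_mem_spectrum.mpr h1
  obtain ⟨k, hk⟩ := eigenvalue_mem_ball h2
  refine ⟨k, ?_⟩
  rw [Metric.mem_closedBall, dist_eq_norm] at hk
  calc ‖μ‖ ≤ ‖μ - M k k‖ + ‖M k k‖ := by
        simpa using norm_add_le (μ - M k k) (M k k)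
    _ ≤ (∑ j ∈ Finset.univ.erase k, ‖M k j‖) + ‖M k k‖ := by linarith
    _ = ∑ j, ‖M k j‖ := by rw [Finset.sum_erase_eq_sub (mem_univ k)]; ring

end AuxAR

/-- The Anti-Reflective matrix `W^AR ∈ ℝ^{n×n}` (0-based indices; `i.val` plays the
role of the 1-based index `i - 1`) built from a filter `w` of length `l`,
where `z j = 2 ∑_{k=j}^{l} w k`. -/
def antiReflectiveMatrix (n l : ℕ) (w : ℕ → ℝ) : Matrix (Fin n) (Fin n) ℝ :=
  Matrix.of fun i j : Fin n =>
    if i.val = 0 then (if j.val = 0 then 2 * ∑ k ∈ Finset.Icc 1 l, w k + w 0 else 0)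
    else if i.val = n - 1 then (if j.val = n - 1 then 2 * ∑ k ∈ Finset.Icc 1 l, w k + w 0 else 0)
    else if j.val = 0 then 2 * ∑ k ∈ Finset.Icc (i.val + 1) l, w k + w i.val
    else if j.val = n - 1 then 2 * ∑ k ∈ Finset.Icc (n - i.val) l, w k + w (n - 1 - i.val)
    else w ((i.val : ℤ) - (j.val : ℤ)).natAbs
        - (w (i.val + j.val) + w (2 * n - 2 - i.val - j.val))

/-- For a symmetric *decreasing* filter, the Anti-Reflective matrix
`W^AR` has nonnegative entries, each of its rows sums to 1 (so its ∞-operator norm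
equals 1), every eigenvalue lies in the closed complex unit disc, and in particular
every real eigenvalue lies in `[-1, 1]`. -/
theorem stmt_7 (n l : ℕ) (hn : 3 ≤ n)
    (hl : 0 < l) (hln : l ≤ (n - 1) / 2) (w : ℕ → ℝ)
    (hpos : ∀ j, j ≤ l → 0 < w j)
    (hdec : ∀ i j, i ≤ j → j ≤ l → w j ≤ w i)
    (hzero : ∀ k, l < k → w k = 0)
    (hsum : w 0 + 2 * ∑ j ∈ Finset.Icc 1 l, w j = 1) :
    (∀ i j : Fin n, 0 ≤ antiReflectiveMatrix n l w i j) ∧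
    (∀ i : Fin n, ∑ j : Fin n, antiReflectiveMatrix n l w i j = 1) ∧
    (⨆ i : Fin n, ∑ j : Fin n, |antiReflectiveMatrix n l w i j|) = 1 ∧
    (∀ μ : ℂ, μ ∈ spectrum ℂ ((antiReflectiveMatrix n l w).map (fun x : ℝ => (x : ℂ))) →
      ‖μ‖ ≤ 1) ∧
    (∀ μ : ℝ, μ ∈ spectrum ℝ (antiReflectiveMatrix n l w) → -1 ≤ μ ∧ μ ≤ 1) := by
  have wnn : ∀ k, 0 ≤ w k := arWnonneg hpos hzero
  have sumnn : ∀ a b : ℕ, (0:ℝ) ≤ ∑ k ∈ Icc a b, w k :=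
    fun a b => Finset.sum_nonneg (fun k _ => wnn k)
  -- Nonnegativity
  have hNN : ∀ i j : Fin n, 0 ≤ antiReflectiveMatrix n l w i j := by
    intro i j
    have hiv := i.isLt
    have hjv := j.isLt
    simp only [antiReflectiveMatrix, Matrix.of_apply]
    split_ifs with h1 h2 h3 h4 h5 h6
    · linarith [sumnn 1 l, wnn 0]
    · exact le_rfl
    · linarith [sumnn 1 l, wnn 0]
    · exact le_rfl
    · linarith [sumnn (i.val+1) l, wnn i.val]
    · linarith [sumnn (n-i.val) l, wnn (n-1-i.val)]
    · exact arInteriorNonneg hpos hdec hzero hn hln (by omega) (by omega) (by omega) (by omega)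
  -- Row sums
  have hRow : ∀ i : Fin n, ∑ j : Fin n, antiReflectiveMatrix n l w i j = 1 := by
    intro i
    have hiv := i.isLt
    rcases eq_or_ne i.val 0 with hi0 | hi0
    · rw [Finset.sum_eq_single_of_mem (⟨0, by omega⟩ : Fin n) (mem_univ _)
        (fun j _ hj => by
          have hjv : ¬ (j:ℕ) = 0 := fun h => hj (Fin.ext h)
          simp only [antiReflectiveMatrix, Matrix.of_apply]
          rw [if_pos hi0, if_neg hjv])]
      simp only [antiReflectiveMatrix, Matrix.of_apply]
      rw [if_pos hi0, if_pos trivial]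
      linarith [hsum]
    · rcases eq_or_ne i.val (n-1) with hi1 | hi1
      · rw [Finset.sum_eq_single_of_mem (⟨n-1, by omega⟩ : Fin n) (mem_univ _)
          (fun j _ hj => by
            have hjv : ¬ (j:ℕ) = n-1 := fun h => hj (Fin.ext h)
            simp only [antiReflectiveMatrix, Matrix.of_apply]
            rw [if_neg hi0, if_pos hi1, if_neg hjv])]
        simp only [antiReflectiveMatrix, Matrix.of_apply]
        rw [if_neg hi0, if_pos hi1, if_pos trivial]
        linarith [hsum]
      · -- interior row
        have ha1 : 1 ≤ i.val := by omega
        have ha2 : i.val ≤ n - 2 := by omega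
        set G : ℕ → ℝ := fun j =>
          if j = 0 then 2 * ∑ k ∈ Icc (i.val + 1) l, w k + w i.val
          else if j = n - 1 then 2 * ∑ k ∈ Icc (n - i.val) l, w k + w (n - 1 - i.val)
          else w ((i.val:ℤ) - (j:ℤ)).natAbs
            - (w (i.val + j) + w (2 * n - 2 - i.val - j)) with hG
        have hstep : ∑ j : Fin n, antiReflectiveMatrix n l w i j = ∑ j ∈ range n, G j := by
          rw [← Fin.sum_univ_eq_sum_range G n]
          apply Finset.sum_congr rfl
          intro j _
          simp only [antiReflectiveMatrix, Matrix.of_apply, hG]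
          rw [if_neg hi0, if_neg hi1]
        rw [hstep, range_eq_Ico, Finset.sum_eq_sum_Ico_succ_bot (by omega : 0 < n),
          show Ico (0+1) n = Ico 1 ((n-1)+1) from by congr 1; omega,
          Finset.sum_Ico_succ_top (by omega : 1 ≤ n - 1)]
        have hG0 : G 0 = 2 * ∑ k ∈ Icc (i.val + 1) l, w k + w i.val := by
          simp only [hG]
          rw [if_pos trivial]
        have hGn : G (n-1)
            = 2 * ∑ k ∈ Icc (n - i.val) l, w k + w (n - 1 - i.val) := by
          simp only [hG]
          rw [if_neg (by omega), if_pos trivial]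
        have hGm : ∑ j ∈ Ico 1 (n-1), G j
            = ∑ j ∈ Ico 1 (n-1), (w ((i.val:ℤ) - (j:ℤ)).natAbs
              - (w (i.val+j) + w (2*n-2-i.val-j))) := by
          apply Finset.sum_congr rfl
          intro j hj
          simp only [mem_Ico] at hj
          simp only [hG]
          rw [if_neg (by omega), if_neg (by omega)]
        rw [hG0, hGn, hGm]
        have := arInteriorRow hzero hn hln ha1 ha2 (w := w)
        linarith [this, hsum]
  refine ⟨hNN, hRow, ?_, ?_, ?_⟩
  · -- sup of abs row sums
    have habs : ∀ i : Fin n, ∑ j : Fin n, |antiReflectiveMatrix n l w i j| = 1 := by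
      intro i
      rw [← hRow i]
      exact Finset.sum_congr rfl (fun j _ => abs_of_nonneg (hNN i j))
    have : Nonempty (Fin n) := ⟨⟨0, by omega⟩⟩
    calc (⨆ i : Fin n, ∑ j : Fin n, |antiReflectiveMatrix n l w i j|)
        = ⨆ _ : Fin n, (1:ℝ) := by congr 1; funext i; exact habs i
      _ = 1 := ciSup_const
  · -- complex eigenvalues
    intro μ hμ
    obtain ⟨k, hk⟩ := arSpecNormLe _ hμ
    refine hk.trans ?_
    have : ∀ j : Fin n, ‖((antiReflectiveMatrix n l w).map (fun x : ℝ => (x : ℂ))) k j‖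
        = antiReflectiveMatrix n l w k j := by
      intro j
      rw [Matrix.map_apply, Complex.norm_real, Real.norm_eq_abs, abs_of_nonneg (hNN k j)]
    rw [Finset.sum_congr rfl (fun j _ => this j), hRow k]
  · -- real eigenvalues
    intro μ hμ
    obtain ⟨k, hk⟩ := arSpecNormLe _ hμ
    have : ∀ j : Fin n, ‖antiReflectiveMatrix n l w k j‖ = antiReflectiveMatrix n l w k j := by
      intro j
      rw [Real.norm_eq_abs, abs_of_nonneg (hNN k j)]
    rw [Finset.sum_congr rfl (fun j _ => this j), hRow k] at hk
    rw [Real.norm_eq_abs] at hk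
    exact abs_le.mp hk
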